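/- arXiv:2006.15377 — 4 statements merged into one kernel-verified Lean document; each statement's English description precedes it below -/
import Mathlib

section
/- Let λ̄ : [0,∞) → [0,∞) be measurable with 0 < ∫₀^∞ λ̄(t) dt < ∞ and suppose ∫₀^∞ λ̄(t) t e^{-ρt} dt > 0. Let ρ ∈ ℝ satisfy ∫₀^∞ λ̄(t) e^{-ρt} dt = 1, and for ε ∈ (0,1) let ρ_ε ∈ ℝ satisfy (1−ε) ∫₀^∞ λ̄(t) e^{-ρ_ε t} dt = 1. Then 0 ≤ ρ − ρ_ε ≤ (ε/(1−ε)) · (∫₀^∞ λ̄(t) t e^{-ρt} dt)^{-1}. -/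
open MeasureTheory Set Filter

theorem stmt1 (lam : ℝ → ℝ) (hmeas : Measurable lam) (hnn : ∀ t, 0 ≤ lam t)
    (hpos : 0 < ∫ t in Ioi (0:ℝ), lam t) (hfin : IntegrableOn lam (Ioi 0))
    (ρ : ℝ) (hρ : (∫ t in Ioi (0:ℝ), lam t * Real.exp (-ρ * t)) = 1)
    (hden : 0 < ∫ t in Ioi (0:ℝ), lam t * t * Real.exp (-ρ * t))
    (ε : ℝ) (hε : ε ∈ Ioo (0:ℝ) 1)
    (ρε : ℝ) (hρε : (1 - ε) * ∫ t in Ioi (0:ℝ), lam t * Real.exp (-ρε * t) = 1) :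
    0 ≤ ρ - ρε ∧
      ρ - ρε ≤ (ε / (1 - ε)) * (∫ t in Ioi (0:ℝ), lam t * t * Real.exp (-ρ * t))⁻¹ := by
  obtain ⟨hε0, hε1⟩ := hε
  have h1ε : 0 < 1 - ε := by linarith
  have hIρ : IntegrableOn (fun t => lam t * Real.exp (-ρ * t)) (Ioi 0) := by
    by_contra h
    rw [MeasureTheory.integral_undef h] at hρ
    norm_num at hρ
  have hIρε : IntegrableOn (fun t => lam t * Real.exp (-ρε * t)) (Ioi 0) := by
    by_contra h
    rw [MeasureTheory.integral_undef h] at hρε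
    simp at hρε
  have hID : IntegrableOn (fun t => lam t * t * Real.exp (-ρ * t)) (Ioi 0) := by
    by_contra h
    rw [MeasureTheory.integral_undef h] at hden
    exact lt_irrefl 0 hden
  have hJ : (∫ t in Ioi (0:ℝ), lam t * Real.exp (-ρε * t)) = (1 - ε)⁻¹ := by
    rw [inv_eq_one_div, eq_div_iff (ne_of_gt h1ε), mul_comm]
    exact hρε
  -- first inequality
  have hle : ρε ≤ ρ := by
    by_contra h
    push_neg at h
    have hmono : (∫ t in Ioi (0:ℝ), lam t * Real.exp (-ρε * t))
        ≤ ∫ t in Ioi (0:ℝ), lam t * Real.exp (-ρ * t) := by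
      refine setIntegral_mono_on hIρε hIρ measurableSet_Ioi ?_
      intro t ht
      have ht0 : (0:ℝ) < t := ht
      have : -ρε * t ≤ -ρ * t := by nlinarith
      exact mul_le_mul_of_nonneg_left (Real.exp_le_exp.2 this) (hnn t)
    rw [hJ, hρ] at hmono
    have : (1:ℝ) < (1 - ε)⁻¹ := (one_lt_inv₀ h1ε).2 (by linarith)
    linarith
  refine ⟨by linarith, ?_⟩
  rcases eq_or_lt_of_le hle with heq | hlt
  · rw [heq, sub_self]
    exact mul_nonneg (div_nonneg hε0.le h1ε.le) (inv_nonneg.2 hden.le)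
  · -- pointwise bound and integration
    have key : (ρ - ρε) * ∫ t in Ioi (0:ℝ), lam t * t * Real.exp (-ρ * t)
        ≤ (1 - ε)⁻¹ - 1 := by
      have hmono : (∫ t in Ioi (0:ℝ), (ρ - ρε) * (lam t * t * Real.exp (-ρ * t)))
          ≤ ∫ t in Ioi (0:ℝ), (lam t * Real.exp (-ρε * t) - lam t * Real.exp (-ρ * t)) := by
        refine setIntegral_mono_on (hID.const_mul _) (hIρε.sub hIρ) measurableSet_Ioi ?_
        intro t ht
        have ht0 : (0:ℝ) < t := ht
        have key1 : (ρ - ρε) * t + 1 ≤ Real.exp ((ρ - ρε) * t) := Real.add_one_le_exp _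
        have hsplit : Real.exp (-ρε * t) = Real.exp ((ρ - ρε) * t) * Real.exp (-ρ * t) := by
          rw [← Real.exp_add]; ring_nf
        have hexp : (ρ - ρε) * t * Real.exp (-ρ * t)
            ≤ Real.exp (-ρε * t) - Real.exp (-ρ * t) := by
          rw [hsplit]
          nlinarith [Real.exp_pos (-ρ * t)]
        have := mul_le_mul_of_nonneg_left hexp (hnn t)
        nlinarith [this]
      rw [MeasureTheory.integral_const_mul] at hmono
      rw [MeasureTheory.integral_sub hIρε hIρ, hJ, hρ] at hmono
      exact hmono
    have hstep : ρ - ρε ≤ ((1 - ε)⁻¹ - 1) / (∫ t in Ioi (0:ℝ), lam t * t * Real.exp (-ρ * t)) :=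
      (le_div_iff₀ hden).2 key
    have heq2 : (1 - ε)⁻¹ - 1 = ε / (1 - ε) := by field_simp; ring
    rw [heq2, div_eq_mul_inv] at hstep
    exact hstep
end

section
/- Let {X^N}_{N≥1} be a sequence of real-valued stochastic processes with càdlàg paths. Suppose that for every T > 0: (i) for every ε > 0 and every t ∈ [0,T], ℙ(|X^N(t)| > ε) → 0 as N → ∞; and (ii) for every ε > 0, limsup_N sup_{0≤t≤T} (1/δ) ℙ(sup_{0≤u≤δ} |X^N(t+u) − X^N(t)| > ε) → 0 as δ → 0. Then for every T > 0 and ε > 0, ℙ(sup_{0≤t≤T} |X^N(t)| > ε) → 0 as N → ∞, i.e. X^N → 0 in probability locally uniformly in t. -/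
open MeasureTheory Set Filter
open scoped ENNReal NNReal

lemma cadlag_bdd {f : ℝ → ℝ}
    (hR : ∀ t : ℝ, ContinuousWithinAt f (Ici t) t)
    (hL : ∀ t : ℝ, ∃ l : ℝ, Tendsto f (nhdsWithin t (Iio t)) (nhds l))
    (a b : ℝ) : ∃ M : ℝ, ∀ x ∈ Icc a b, |f x| ≤ M := by
  classical
  have hloc : ∀ t : ℝ, ∃ M : ℝ, ∀ᶠ x in nhds t, |f x| ≤ M := by
    intro t
    obtain ⟨l, hl⟩ := hL t
    have h1 : ∀ᶠ x in nhdsWithin t (Iio t), |f x| ≤ max (|l| + 1) (|f t| + 1) := by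
      filter_upwards [hl (Metric.ball_mem_nhds l one_pos)] with x hx
      have : |f x - l| < 1 := by simpa [Real.dist_eq] using hx
      have : |f x| ≤ |l| + 1 := by
        calc |f x| = |l + (f x - l)| := by ring_nf
        _ ≤ |l| + |f x - l| := abs_add_le _ _
        _ ≤ |l| + 1 := by linarith
      exact this.trans (le_max_left _ _)
    have h2 : ∀ᶠ x in nhdsWithin t (Ici t), |f x| ≤ max (|l| + 1) (|f t| + 1) := by
      filter_upwards [(hR t) (Metric.ball_mem_nhds (f t) one_pos)] with x hx
      have : |f x - f t| < 1 := by simpa [Real.dist_eq] using hx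
      have : |f x| ≤ |f t| + 1 := by
        calc |f x| = |f t + (f x - f t)| := by ring_nf
        _ ≤ |f t| + |f x - f t| := abs_add_le _ _
        _ ≤ |f t| + 1 := by linarith
      exact this.trans (le_max_right _ _)
    refine ⟨max (|l| + 1) (|f t| + 1), ?_⟩
    rw [← nhdsLT_sup_nhdsGE t, eventually_sup]
    exact ⟨h1, h2⟩
  choose M hM using hloc
  obtain ⟨F, -, hcov⟩ := (isCompact_Icc (a := a) (b := b)).elim_nhds_subcover
    (fun t => {x | |f x| ≤ M t}) (fun t _ => hM t)
  obtain ⟨B, hB⟩ := (F.image M).exists_le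
  refine ⟨B, fun x hx => ?_⟩
  obtain ⟨t, htF, hxt⟩ := mem_iUnion₂.mp (hcov hx)
  exact le_trans hxt (hB _ (Finset.mem_image_of_mem M htF))

lemma lt_biSup_real {g : ℝ → ℝ} {s : Set ℝ} {ε : ℝ} (hε : 0 < ε)
    (h : ε < ⨆ t ∈ s, g t) : ∃ t ∈ s, ε < g t := by
  by_contra hc
  push_neg at hc
  have : (⨆ t ∈ s, g t) ≤ ε :=
    Real.iSup_le (fun t => Real.iSup_le (fun ht => hc t ht) hε.le) hε.le
  linarith

lemma le_biSup_real {g : ℝ → ℝ} {s : Set ℝ} {M : ℝ} (hb : ∀ t ∈ s, g t ≤ M)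
    {t₀ : ℝ} (ht₀ : t₀ ∈ s) : g t₀ ≤ ⨆ t ∈ s, g t := by
  have hbdd : BddAbove (range fun t => ⨆ _ : t ∈ s, g t) := by
    refine ⟨max M 0, ?_⟩
    rintro _ ⟨t, rfl⟩
    simp only []
    show (⨆ _ : t ∈ s, g t) ≤ max M 0
    by_cases ht : t ∈ s
    · rw [ciSup_pos ht]; exact (hb t ht).trans (le_max_left _ _)
    · haveI : IsEmpty (t ∈ s) := ⟨ht⟩
      rw [Real.iSup_of_isEmpty]
      exact le_max_right _ _
  have := le_ciSup hbdd t₀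
  rwa [ciSup_pos ht₀] at this

theorem stmt5 {Ω : Type*} [MeasurableSpace Ω] (P : Measure Ω) [IsProbabilityMeasure P]
    (X : ℕ → Ω → ℝ → ℝ)
    (hcadlag : ∀ N ω, (∀ t : ℝ, ContinuousWithinAt (X N ω) (Ici t) t) ∧
      ∀ t : ℝ, ∃ l : ℝ, Tendsto (X N ω) (nhdsWithin t (Iio t)) (nhds l))
    (h1 : ∀ T > (0:ℝ), ∀ ε > (0:ℝ), ∀ t ∈ Icc (0:ℝ) T,
      Tendsto (fun N => P {ω | ε < |X N ω t|}) atTop (nhds 0))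
    (h2 : ∀ T > (0:ℝ), ∀ ε > (0:ℝ),
      Tendsto (fun δ : ℝ =>
        Filter.limsup (fun N => (1/δ) * ⨆ t ∈ Icc (0:ℝ) T,
          (P {ω | ε < ⨆ u ∈ Icc (0:ℝ) δ, |X N ω (t+u) - X N ω t|}).toReal) atTop)
        (nhdsWithin 0 (Ioi 0)) (nhds 0)) :
    ∀ T > (0:ℝ), ∀ ε > (0:ℝ),
      Tendsto (fun N => P {ω | ε < ⨆ t ∈ Icc (0:ℝ) T, |X N ω t|}) atTop (nhds 0) := by
  intro T hT ε hε
  rw [ENNReal.tendsto_atTop_zero]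
  intro η hη
  obtain ⟨r, hrpos, hofr⟩ : ∃ r : ℝ, 0 < r ∧ ENNReal.ofReal r ≤ η := by
    refine ⟨(min η 1).toReal, ?_, ?_⟩
    · exact ENNReal.toReal_pos (lt_min hη zero_lt_one).ne'
        ((min_le_right η 1).trans_lt ENNReal.one_lt_top).ne
    · rw [ENNReal.ofReal_toReal ((min_le_right η 1).trans_lt ENNReal.one_lt_top).ne]
      exact min_le_left _ _
  set c := r / (2*(T+1)) with hc_def
  have hc : 0 < c := by positivity
  have h2' := h2 T hT (ε/2) (by positivity)
  have hev1 : ∀ᶠ δ in nhdsWithin (0:ℝ) (Ioi 0),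
      (Filter.limsup (fun N => (1/δ) * ⨆ t ∈ Icc (0:ℝ) T,
        (P {ω | ε/2 < ⨆ u ∈ Icc (0:ℝ) δ, |X N ω (t+u) - X N ω t|}).toReal) atTop) < c :=
    h2'.eventually (gt_mem_nhds hc)
  have hev2 : ∀ᶠ δ in nhdsWithin (0:ℝ) (Ioi 0), δ < 1 :=
    nhdsWithin_le_nhds (eventually_lt_nhds zero_lt_one)
  have hev3 : ∀ᶠ δ in nhdsWithin (0:ℝ) (Ioi 0), (0:ℝ) < δ := self_mem_nhdsWithin
  obtain ⟨δ, hls, hδ1, hδ0⟩ := (hev1.and (hev2.and hev3)).exists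
  set n := Nat.floor (T/δ) + 1 with hn_def
  have hnpos : 0 < n := Nat.succ_pos _
  have hTδ : (0:ℝ) ≤ T/δ := by positivity
  have hgrid : ∀ i : ℕ, i < n → (i:ℝ)*δ ∈ Icc (0:ℝ) T := by
    intro i hi
    constructor
    · positivity
    · have hi' : i ≤ Nat.floor (T/δ) := Nat.lt_succ_iff.mp hi
      have h : (i:ℝ) ≤ T/δ := le_trans (Nat.cast_le.mpr hi') (Nat.floor_le hTδ)
      calc (i:ℝ)*δ ≤ (T/δ)*δ := by nlinarith
      _ = T := by field_simp
  -- inclusion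
  have hincl : ∀ N, {ω | ε < ⨆ t ∈ Icc (0:ℝ) T, |X N ω t|} ⊆
      ⋃ i ∈ Finset.range n,
        ({ω | ε/2 < |X N ω ((i:ℝ)*δ)|} ∪
         {ω | ε/2 < ⨆ u ∈ Icc (0:ℝ) δ, |X N ω ((i:ℝ)*δ + u) - X N ω ((i:ℝ)*δ)|}) := by
    intro N ω hω
    obtain ⟨t, ht, hεt⟩ := lt_biSup_real hε hω
    set i := Nat.floor (t/δ) with hi_def
    have htδ : 0 ≤ t/δ := div_nonneg ht.1 hδ0.le
    have hfl : (i:ℝ) ≤ t/δ := Nat.floor_le htδ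
    have hle : (i:ℝ)*δ ≤ t := by
      calc (i:ℝ)*δ ≤ (t/δ)*δ := by nlinarith
      _ = t := by field_simp
    have hlt : t < (i:ℝ)*δ + δ := by
      have h := (div_lt_iff₀ hδ0).mp (Nat.lt_floor_add_one (t/δ))
      nlinarith
    have hi_lt : i < n := by
      have hmono : i ≤ Nat.floor (T/δ) := Nat.floor_mono (by gcongr; exact ht.2)
      omega
    refine mem_iUnion₂.mpr ⟨i, Finset.mem_range.mpr hi_lt, ?_⟩
    by_cases hA : ε/2 < |X N ω ((i:ℝ)*δ)|
    · exact Or.inl hA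
    · push_neg at hA
      refine Or.inr ?_
      have key : ε/2 < |X N ω ((i:ℝ)*δ + (t - (i:ℝ)*δ)) - X N ω ((i:ℝ)*δ)| := by
        have habs : |X N ω t| ≤ |X N ω ((i:ℝ)*δ)| + |X N ω t - X N ω ((i:ℝ)*δ)| := by
          have h := abs_add_le (X N ω ((i:ℝ)*δ)) (X N ω t - X N ω ((i:ℝ)*δ))
          simpa using h
        rw [add_sub_cancel]
        linarith
      obtain ⟨M, hM⟩ := cadlag_bdd (hcadlag N ω).1 (hcadlag N ω).2 ((i:ℝ)*δ) ((i:ℝ)*δ + δ)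
      show ε/2 < ⨆ u ∈ Icc (0:ℝ) δ, |X N ω ((i:ℝ)*δ + u) - X N ω ((i:ℝ)*δ)|
      have hbound : ∀ u ∈ Icc (0:ℝ) δ,
          (fun u => |X N ω ((i:ℝ)*δ + u) - X N ω ((i:ℝ)*δ)|) u ≤ 2*M := by
        intro u hu
        have hb1 := hM ((i:ℝ)*δ + u) ⟨by linarith [hu.1], by linarith [hu.2]⟩
        have hb2 := hM ((i:ℝ)*δ) ⟨le_refl _, by linarith⟩
        calc |X N ω ((i:ℝ)*δ + u) - X N ω ((i:ℝ)*δ)|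
            ≤ |X N ω ((i:ℝ)*δ + u)| + |X N ω ((i:ℝ)*δ)| := abs_sub _ _
        _ ≤ 2*M := by linarith
      have hmem : t - (i:ℝ)*δ ∈ Icc (0:ℝ) δ := ⟨sub_nonneg.mpr hle, by linarith⟩
      exact lt_of_lt_of_le key
        (le_biSup_real (g := fun u => |X N ω ((i:ℝ)*δ + u) - X N ω ((i:ℝ)*δ)|)
          (M := 2*M) hbound hmem)
  -- abbreviations
  set S : ℕ → ℝ := fun N => ⨆ t ∈ Icc (0:ℝ) T,
    (P {ω | ε/2 < ⨆ u ∈ Icc (0:ℝ) δ, |X N ω (t+u) - X N ω t|}).toReal with hS_def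
  have htoReal_le_one : ∀ s : Set Ω, (P s).toReal ≤ 1 := by
    intro s
    have := ENNReal.toReal_mono ENNReal.one_ne_top (prob_le_one (μ := P) (s := s))
    simpa using this
  have hSle : ∀ N, S N ≤ 1 := fun N =>
    Real.iSup_le (fun t => Real.iSup_le (fun _ => htoReal_le_one _) one_pos.le) one_pos.le
  have hSnonneg : ∀ N, 0 ≤ S N := fun N =>
    Real.iSup_nonneg fun t => Real.iSup_nonneg fun _ => ENNReal.toReal_nonneg
  have hBle : ∀ N, ∀ i < n,
      P {ω | ε/2 < ⨆ u ∈ Icc (0:ℝ) δ, |X N ω ((i:ℝ)*δ + u) - X N ω ((i:ℝ)*δ)|}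
        ≤ ENNReal.ofReal (S N) := by
    intro N i hi
    have hle : (P {ω | ε/2 < ⨆ u ∈ Icc (0:ℝ) δ,
        |X N ω ((i:ℝ)*δ + u) - X N ω ((i:ℝ)*δ)|}).toReal ≤ S N :=
      le_biSup_real (g := fun t => (P {ω | ε/2 < ⨆ u ∈ Icc (0:ℝ) δ,
        |X N ω (t+u) - X N ω t|}).toReal) (M := 1)
        (fun t _ => htoReal_le_one _) (hgrid i hi)
    calc P {ω | ε/2 < ⨆ u ∈ Icc (0:ℝ) δ, |X N ω ((i:ℝ)*δ + u) - X N ω ((i:ℝ)*δ)|}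
        = ENNReal.ofReal ((P {ω | ε/2 < ⨆ u ∈ Icc (0:ℝ) δ,
            |X N ω ((i:ℝ)*δ + u) - X N ω ((i:ℝ)*δ)|}).toReal) :=
          (ENNReal.ofReal_toReal (measure_ne_top P _)).symm
    _ ≤ ENNReal.ofReal (S N) := ENNReal.ofReal_le_ofReal hle
  have hbddU : IsBoundedUnder (· ≤ ·) atTop (fun N => (1/δ) * S N) := by
    refine isBoundedUnder_of ⟨1/δ, fun N => ?_⟩
    have h1δ : 0 ≤ 1/δ := by positivity
    nlinarith [hSle N, hSnonneg N]
  have hevN : ∀ᶠ N in atTop, (1/δ) * S N < c := eventually_lt_of_limsup_lt hls hbddU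
  have hevB : ∀ᶠ N in atTop, ∑ i ∈ Finset.range n,
      P {ω | ε/2 < ⨆ u ∈ Icc (0:ℝ) δ, |X N ω ((i:ℝ)*δ + u) - X N ω ((i:ℝ)*δ)|}
        ≤ ENNReal.ofReal (r/2) := by
    filter_upwards [hevN] with N hN
    have hSlt : S N < c*δ := by
      rw [one_div, inv_mul_eq_div] at hN
      exact (div_lt_iff₀ hδ0).mp hN
    have hn_le : (n:ℝ) ≤ (T+1)/δ := by
      have hfl := Nat.floor_le hTδ
      have hfd : ((Nat.floor (T/δ)):ℝ) * δ ≤ T := by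
        calc ((Nat.floor (T/δ)):ℝ) * δ ≤ (T/δ)*δ := by nlinarith
        _ = T := by field_simp
      rw [hn_def]
      push_cast
      rw [le_div_iff₀ hδ0]
      nlinarith
    have hS : (n:ℝ) * S N ≤ r/2 := by
      have hnn : (0:ℝ) ≤ (n:ℝ) := Nat.cast_nonneg n
      have : (n:ℝ) * S N ≤ ((T+1)/δ) * (c*δ) := by nlinarith [hSnonneg N]
      have heq : ((T+1)/δ) * (c*δ) = r/2 := by
        rw [hc_def]; field_simp
      linarith
    calc ∑ i ∈ Finset.range n,
        P {ω | ε/2 < ⨆ u ∈ Icc (0:ℝ) δ, |X N ω ((i:ℝ)*δ + u) - X N ω ((i:ℝ)*δ)|}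
        ≤ ∑ _i ∈ Finset.range n, ENNReal.ofReal (S N) :=
          Finset.sum_le_sum (fun i hi => hBle N i (Finset.mem_range.mp hi))
    _ = (n : ℝ≥0∞) * ENNReal.ofReal (S N) := by
          rw [Finset.sum_const, Finset.card_range, nsmul_eq_mul]
    _ = ENNReal.ofReal ((n:ℝ) * S N) := by
          rw [ENNReal.ofReal_mul (by positivity), ENNReal.ofReal_natCast]
    _ ≤ ENNReal.ofReal (r/2) := ENNReal.ofReal_le_ofReal hS
  have hevA : ∀ᶠ N in atTop, ∀ i ∈ Finset.range n,
      P {ω | ε/2 < |X N ω ((i:ℝ)*δ)|} ≤ ENNReal.ofReal (r/(2*n)) := by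
    rw [eventually_all_finset]
    intro i hi
    have htend := h1 T hT (ε/2) (by positivity) ((i:ℝ)*δ) (hgrid i (Finset.mem_range.mp hi))
    have hpos : (0:ℝ≥0∞) < ENNReal.ofReal (r/(2*n)) := by
      apply ENNReal.ofReal_pos.mpr
      have : (0:ℝ) < (n:ℝ) := Nat.cast_pos.mpr hnpos
      positivity
    obtain ⟨N₀, hN₀⟩ := (ENNReal.tendsto_atTop_zero.mp htend) _ hpos
    exact eventually_atTop.mpr ⟨N₀, hN₀⟩
  have hevAsum : ∀ᶠ N in atTop, ∑ i ∈ Finset.range n,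
      P {ω | ε/2 < |X N ω ((i:ℝ)*δ)|} ≤ ENNReal.ofReal (r/2) := by
    filter_upwards [hevA] with N hN
    calc ∑ i ∈ Finset.range n, P {ω | ε/2 < |X N ω ((i:ℝ)*δ)|}
        ≤ ∑ _i ∈ Finset.range n, ENNReal.ofReal (r/(2*n)) := Finset.sum_le_sum hN
    _ = (n : ℝ≥0∞) * ENNReal.ofReal (r/(2*n)) := by
          rw [Finset.sum_const, Finset.card_range, nsmul_eq_mul]
    _ = ENNReal.ofReal ((n:ℝ) * (r/(2*n))) := by
          rw [ENNReal.ofReal_mul (by positivity), ENNReal.ofReal_natCast]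
    _ = ENNReal.ofReal (r/2) := by
          congr 1
          have hne : (n:ℝ) ≠ 0 := Nat.cast_ne_zero.mpr hnpos.ne'
          field_simp
  have hfin : ∀ᶠ N in atTop, P {ω | ε < ⨆ t ∈ Icc (0:ℝ) T, |X N ω t|} ≤ η := by
    filter_upwards [hevAsum, hevB] with N hA hB
    calc P {ω | ε < ⨆ t ∈ Icc (0:ℝ) T, |X N ω t|}
        ≤ P (⋃ i ∈ Finset.range n,
          ({ω | ε/2 < |X N ω ((i:ℝ)*δ)|} ∪
           {ω | ε/2 < ⨆ u ∈ Icc (0:ℝ) δ, |X N ω ((i:ℝ)*δ + u) - X N ω ((i:ℝ)*δ)|})) :=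
          measure_mono (hincl N)
    _ ≤ ∑ i ∈ Finset.range n, P
          ({ω | ε/2 < |X N ω ((i:ℝ)*δ)|} ∪
           {ω | ε/2 < ⨆ u ∈ Icc (0:ℝ) δ, |X N ω ((i:ℝ)*δ + u) - X N ω ((i:ℝ)*δ)|}) :=
          measure_biUnion_finset_le _ _
    _ ≤ ∑ i ∈ Finset.range n,
          (P {ω | ε/2 < |X N ω ((i:ℝ)*δ)|} +
           P {ω | ε/2 < ⨆ u ∈ Icc (0:ℝ) δ, |X N ω ((i:ℝ)*δ + u) - X N ω ((i:ℝ)*δ)|}) :=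
          Finset.sum_le_sum (fun i _ => measure_union_le _ _)
    _ = (∑ i ∈ Finset.range n, P {ω | ε/2 < |X N ω ((i:ℝ)*δ)|}) +
        ∑ i ∈ Finset.range n,
          P {ω | ε/2 < ⨆ u ∈ Icc (0:ℝ) δ, |X N ω ((i:ℝ)*δ + u) - X N ω ((i:ℝ)*δ)|} :=
          Finset.sum_add_distrib
    _ ≤ ENNReal.ofReal (r/2) + ENNReal.ofReal (r/2) := add_le_add hA hB
    _ = ENNReal.ofReal r := by
          rw [← ENNReal.ofReal_add (by positivity) (by positivity)]
          ring_nf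
    _ ≤ η := hofr
  exact eventually_atTop.mp hfin
end

section
/- Consider the system of Volterra integral equations on [0,T]: S̄(t) = S̄(0) − ∫₀^t S̄(s) 𝔍̄(s) ds and 𝔍̄(t) = h(t) + ∫₀^t λ̄(t−s) S̄(s) 𝔍̄(s) ds, where h : [0,T] → [0,∞) is bounded measurable, λ̄ : [0,T] → [0, λ*] is bounded measurable, and S̄(0) ∈ [0,1]. Then any two bounded measurable solutions (S̄₁, 𝔍̄₁) and (S̄₂, 𝔍̄₂) with values in [0,1] × [0, C] (for some C) coincide on [0,T]. -/
open MeasureTheory Set Filter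
open Topology

private lemma meas_bdd_ii {f : ℝ → ℝ} (hf : Measurable f) {t M : ℝ} (ht : 0 ≤ t)
    (hM : ∀ s ∈ Set.Ioc (0:ℝ) t, |f s| ≤ M) : IntervalIntegrable f volume 0 t := by
  rw [intervalIntegrable_iff_integrableOn_Ioc_of_le ht]
  refine Integrable.mono' (g := fun _ => M)
    (integrableOn_const measure_Ioc_lt_top.ne enorm_ne_top) hf.aestronglyMeasurable ?_
  filter_upwards [ae_restrict_mem measurableSet_Ioc] with s hs
  simpa using hM s hs

private lemma gron_zero {f : ℝ → ℝ} {T B K : ℝ} (hf : Measurable f)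
    (hB0 : 0 ≤ B) (hK : 0 ≤ K)
    (hnn : ∀ t ∈ Icc (0:ℝ) T, 0 ≤ f t) (hB : ∀ t ∈ Icc (0:ℝ) T, f t ≤ B)
    (hint : ∀ t ∈ Icc (0:ℝ) T, f t ≤ K * ∫ s in (0:ℝ)..t, f s) :
    ∀ t ∈ Icc (0:ℝ) T, f t = 0 := by
  have key : ∀ n : ℕ, ∀ t ∈ Icc (0:ℝ) T, f t ≤ B * (K * t) ^ n / (n.factorial:ℝ) := by
    intro n
    induction n with
    | zero => intro t ht; simpa using hB t ht
    | succ n ih =>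
      intro t ht
      have ht0 : 0 ≤ t := ht.1
      have hfi : IntervalIntegrable f volume 0 t :=
        meas_bdd_ii hf ht0 (fun s hs => by
          have hs' : s ∈ Icc (0:ℝ) T := ⟨hs.1.le, hs.2.trans ht.2⟩
          rw [abs_of_nonneg (hnn s hs')]; exact hB s hs')
      have hgi : IntervalIntegrable (fun s => B * K ^ n / (n.factorial:ℝ) * s ^ n) volume 0 t :=
        Continuous.intervalIntegrable (by continuity) 0 t
      have hmono : (∫ s in (0:ℝ)..t, f s) ≤ ∫ s in (0:ℝ)..t, B * K ^ n / (n.factorial:ℝ) * s ^ n := by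
        refine intervalIntegral.integral_mono_on ht0 hfi hgi (fun s hs => ?_)
        have hs' : s ∈ Icc (0:ℝ) T := ⟨hs.1, hs.2.trans ht.2⟩
        have := ih s hs'
        calc f s ≤ B * (K * s) ^ n / (n.factorial:ℝ) := this
          _ = B * K ^ n / (n.factorial:ℝ) * s ^ n := by rw [mul_pow]; ring
      have hval : (∫ s in (0:ℝ)..t, B * K ^ n / (n.factorial:ℝ) * s ^ n)
          = B * K ^ n / (n.factorial:ℝ) * (t ^ (n + 1) / (n + 1)) := by
        rw [intervalIntegral.integral_const_mul, integral_pow]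
        norm_num
      have hfac : (((n + 1 : ℕ).factorial : ℕ) : ℝ) = (n + 1) * (n.factorial:ℝ) := by
        rw [Nat.factorial_succ]; push_cast; ring
      have hnpos : (0:ℝ) < (n.factorial:ℝ) := by positivity
      have hn1 : (0:ℝ) < (n:ℝ) + 1 := by positivity
      calc f t ≤ K * ∫ s in (0:ℝ)..t, f s := hint t ht
        _ ≤ K * (B * K ^ n / (n.factorial:ℝ) * (t ^ (n + 1) / (n + 1))) := by
            rw [← hval]; exact mul_le_mul_of_nonneg_left hmono hK
        _ = B * (K * t) ^ (n + 1) / (n+1).factorial := by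
            rw [hfac, mul_pow]; field_simp; ring
  intro t ht
  have hle : f t ≤ 0 := by
    have htend : Tendsto (fun n : ℕ => B * (K * t) ^ n / (n.factorial:ℝ)) atTop (𝓝 0) := by
      have h1 : Tendsto (fun n : ℕ => (K * t) ^ n / (n.factorial:ℝ)) atTop (𝓝 0) :=
        FloorSemiring.tendsto_pow_div_factorial_atTop (K * t)
      have := h1.const_mul B
      simpa [mul_div_assoc] using this
    exact ge_of_tendsto htend (Filter.Eventually.of_forall fun n => key n t ht)
  exact le_antisymm hle (hnn t ht)

theorem stmt7 (T lamstar C : ℝ) (hT : 0 < T)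
    (h : ℝ → ℝ) (hh : Measurable h) (hhnn : ∀ t, 0 ≤ h t) (hhbd : ∃ M, ∀ t, h t ≤ M)
    (lam : ℝ → ℝ) (hlamm : Measurable lam) (hlam0 : ∀ t, 0 ≤ lam t)
    (hlamb : ∀ t, lam t ≤ lamstar)
    (S0 : ℝ) (hS0 : S0 ∈ Icc (0:ℝ) 1)
    (S1 I1 S2 I2 : ℝ → ℝ)
    (hm : Measurable S1 ∧ Measurable I1 ∧ Measurable S2 ∧ Measurable I2)
    (hb1 : ∀ t ∈ Icc (0:ℝ) T, S1 t ∈ Icc (0:ℝ) 1 ∧ I1 t ∈ Icc (0:ℝ) C)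
    (hb2 : ∀ t ∈ Icc (0:ℝ) T, S2 t ∈ Icc (0:ℝ) 1 ∧ I2 t ∈ Icc (0:ℝ) C)
    (heq1S : ∀ t ∈ Icc (0:ℝ) T, S1 t = S0 - ∫ s in (0:ℝ)..t, S1 s * I1 s)
    (heq1I : ∀ t ∈ Icc (0:ℝ) T, I1 t = h t + ∫ s in (0:ℝ)..t, lam (t - s) * (S1 s * I1 s))
    (heq2S : ∀ t ∈ Icc (0:ℝ) T, S2 t = S0 - ∫ s in (0:ℝ)..t, S2 s * I2 s)
    (heq2I : ∀ t ∈ Icc (0:ℝ) T, I2 t = h t + ∫ s in (0:ℝ)..t, lam (t - s) * (S2 s * I2 s)) :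
    ∀ t ∈ Icc (0:ℝ) T, S1 t = S2 t ∧ I1 t = I2 t := by
  obtain ⟨hmS1, hmI1, hmS2, hmI2⟩ := hm
  have h0T : (0:ℝ) ∈ Icc (0:ℝ) T := ⟨le_refl 0, hT.le⟩
  have hC0 : 0 ≤ C := (hb1 0 h0T).2.1.trans (hb1 0 h0T).2.2
  have hls0 : 0 ≤ lamstar := (hlam0 0).trans (hlamb 0)
  set f : ℝ → ℝ := fun t => |S1 t - S2 t| + |I1 t - I2 t| with hfdef
  have hfm : Measurable f := ((hmS1.sub hmS2).abs.add (hmI1.sub hmI2).abs)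
  have hfnn : ∀ t ∈ Icc (0:ℝ) T, 0 ≤ f t := fun t _ => by positivity
  have hfB : ∀ t ∈ Icc (0:ℝ) T, f t ≤ 1 + C := by
    intro t ht
    obtain ⟨hS1b, hI1b⟩ := hb1 t ht
    obtain ⟨hS2b, hI2b⟩ := hb2 t ht
    have h1 : |S1 t - S2 t| ≤ 1 := abs_sub_le_iff.2
      ⟨by linarith [hS1b.2, hS2b.1], by linarith [hS2b.2, hS1b.1]⟩
    have h2 : |I1 t - I2 t| ≤ C := abs_sub_le_iff.2
      ⟨by linarith [hI1b.2, hI2b.1], by linarith [hI2b.2, hI1b.1]⟩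
    simp only [hfdef]; linarith
  -- pointwise bound on the product difference
  have hP : ∀ s ∈ Icc (0:ℝ) T, |S1 s * I1 s - S2 s * I2 s| ≤ (1 + C) * f s := by
    intro s hs
    obtain ⟨hS1b, hI1b⟩ := hb1 s hs
    obtain ⟨hS2b, hI2b⟩ := hb2 s hs
    have hid : S1 s * I1 s - S2 s * I2 s
        = S1 s * (I1 s - I2 s) + I2 s * (S1 s - S2 s) := by ring
    calc |S1 s * I1 s - S2 s * I2 s|
        ≤ |S1 s * (I1 s - I2 s)| + |I2 s * (S1 s - S2 s)| := by
          rw [hid]; exact abs_add_le _ _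
      _ = |S1 s| * |I1 s - I2 s| + |I2 s| * |S1 s - S2 s| := by rw [abs_mul, abs_mul]
      _ ≤ (1 + C) * f s := by
          have e1 : |S1 s| ≤ 1 := by rw [abs_of_nonneg hS1b.1]; exact hS1b.2
          have e2 : |I2 s| ≤ C := by rw [abs_of_nonneg hI2b.1]; exact hI2b.2
          simp only [hfdef]
          nlinarith [abs_nonneg (S1 s - S2 s), abs_nonneg (I1 s - I2 s),
            abs_nonneg (S1 s), abs_nonneg (I2 s)]
  have hPm : Measurable (fun s => S1 s * I1 s - S2 s * I2 s) :=
    (hmS1.mul hmI1).sub (hmS2.mul hmI2)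
  set K : ℝ := (1 + lamstar) * (1 + C) with hKdef
  have hK0 : 0 ≤ K := by positivity
  -- the Grönwall-type inequality
  have hint : ∀ t ∈ Icc (0:ℝ) T, f t ≤ K * ∫ s in (0:ℝ)..t, f s := by
    intro t ht
    have ht0 : 0 ≤ t := ht.1
    have hsub : ∀ s, s ∈ Icc (0:ℝ) t → s ∈ Icc (0:ℝ) T :=
      fun s hs => ⟨hs.1, hs.2.trans ht.2⟩
    -- integrability facts on [0, t]
    have hii11 : IntervalIntegrable (fun s => S1 s * I1 s) volume 0 t :=
      meas_bdd_ii (hmS1.mul hmI1) ht0 (fun s hs => by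
        obtain ⟨hSb, hIb⟩ := hb1 s (hsub s ⟨hs.1.le, hs.2⟩)
        show |S1 s * I1 s| ≤ _
        rw [abs_mul, abs_of_nonneg hSb.1, abs_of_nonneg hIb.1]
        calc S1 s * I1 s ≤ 1 * C := by
              exact mul_le_mul hSb.2 hIb.2 hIb.1 zero_le_one
          _ = C := one_mul C)
    have hii22 : IntervalIntegrable (fun s => S2 s * I2 s) volume 0 t :=
      meas_bdd_ii (hmS2.mul hmI2) ht0 (fun s hs => by
        obtain ⟨hSb, hIb⟩ := hb2 s (hsub s ⟨hs.1.le, hs.2⟩)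
        show |S2 s * I2 s| ≤ _
        rw [abs_mul, abs_of_nonneg hSb.1, abs_of_nonneg hIb.1]
        calc S2 s * I2 s ≤ 1 * C := by
              exact mul_le_mul hSb.2 hIb.2 hIb.1 zero_le_one
          _ = C := one_mul C)
    have hiiP : IntervalIntegrable (fun s => S1 s * I1 s - S2 s * I2 s) volume 0 t :=
      hii11.sub hii22
    have hiif : IntervalIntegrable f volume 0 t :=
      meas_bdd_ii hfm ht0 (fun s hs => by
        have hs' := hsub s ⟨hs.1.le, hs.2⟩
        rw [abs_of_nonneg (hfnn s hs')]; exact hfB s hs')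
    have hiiPabs : IntervalIntegrable (fun s => |S1 s * I1 s - S2 s * I2 s|) volume 0 t :=
      hiiP.abs
    have hiig : IntervalIntegrable (fun s => (1 + C) * f s) volume 0 t :=
      hiif.const_mul _
    -- bound for the S-difference
    have hSdiff : |S1 t - S2 t| ≤ (1 + C) * ∫ s in (0:ℝ)..t, f s := by
      have hEq : S1 t - S2 t
          = -∫ s in (0:ℝ)..t, (S1 s * I1 s - S2 s * I2 s) := by
        rw [heq1S t ht, heq2S t ht, intervalIntegral.integral_sub hii11 hii22]; ring
      rw [hEq, abs_neg]
      calc |∫ s in (0:ℝ)..t, (S1 s * I1 s - S2 s * I2 s)|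
          ≤ ∫ s in (0:ℝ)..t, |S1 s * I1 s - S2 s * I2 s| :=
            intervalIntegral.abs_integral_le_integral_abs ht0
        _ ≤ ∫ s in (0:ℝ)..t, (1 + C) * f s := by
            refine intervalIntegral.integral_mono_on ht0 hiiPabs hiig (fun s hs => ?_)
            exact hP s (hsub s hs)
        _ = (1 + C) * ∫ s in (0:ℝ)..t, f s := intervalIntegral.integral_const_mul _ _
    -- bound for the I-difference
    have hIdiff : |I1 t - I2 t| ≤ lamstar * (1 + C) * ∫ s in (0:ℝ)..t, f s := by
      have hmlam : Measurable (fun s => lam (t - s)) :=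
        hlamm.comp (measurable_const.sub measurable_id)
      have hii1 : IntervalIntegrable (fun s => lam (t - s) * (S1 s * I1 s)) volume 0 t :=
        meas_bdd_ii (hmlam.mul (hmS1.mul hmI1)) ht0 (fun s hs => by
          obtain ⟨hSb, hIb⟩ := hb1 s (hsub s ⟨hs.1.le, hs.2⟩)
          show |lam (t - s) * (S1 s * I1 s)| ≤ _
          rw [abs_mul, abs_mul, abs_of_nonneg (hlam0 _), abs_of_nonneg hSb.1,
            abs_of_nonneg hIb.1]
          calc lam (t - s) * (S1 s * I1 s) ≤ lamstar * (1 * C) := by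
                refine mul_le_mul (hlamb _) ?_ (mul_nonneg hSb.1 hIb.1) hls0
                exact mul_le_mul hSb.2 hIb.2 hIb.1 zero_le_one
            _ = lamstar * C := by ring)
      have hii2 : IntervalIntegrable (fun s => lam (t - s) * (S2 s * I2 s)) volume 0 t :=
        meas_bdd_ii (hmlam.mul (hmS2.mul hmI2)) ht0 (fun s hs => by
          obtain ⟨hSb, hIb⟩ := hb2 s (hsub s ⟨hs.1.le, hs.2⟩)
          show |lam (t - s) * (S2 s * I2 s)| ≤ _
          rw [abs_mul, abs_mul, abs_of_nonneg (hlam0 _), abs_of_nonneg hSb.1,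
            abs_of_nonneg hIb.1]
          calc lam (t - s) * (S2 s * I2 s) ≤ lamstar * (1 * C) := by
                refine mul_le_mul (hlamb _) ?_ (mul_nonneg hSb.1 hIb.1) hls0
                exact mul_le_mul hSb.2 hIb.2 hIb.1 zero_le_one
            _ = lamstar * C := by ring)
      have hEq : I1 t - I2 t
          = ∫ s in (0:ℝ)..t, lam (t - s) * (S1 s * I1 s - S2 s * I2 s) := by
        rw [heq1I t ht, heq2I t ht]
        have : (h t + ∫ s in (0:ℝ)..t, lam (t - s) * (S1 s * I1 s))
            - (h t + ∫ s in (0:ℝ)..t, lam (t - s) * (S2 s * I2 s))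
            = (∫ s in (0:ℝ)..t, lam (t - s) * (S1 s * I1 s))
            - ∫ s in (0:ℝ)..t, lam (t - s) * (S2 s * I2 s) := by ring
        rw [this, ← intervalIntegral.integral_sub hii1 hii2]
        congr 1; funext s; ring
      have hii12 : IntervalIntegrable
          (fun s => lam (t - s) * (S1 s * I1 s - S2 s * I2 s)) volume 0 t := by
        have := hii1.sub hii2
        convert this using 1
        funext s; ring
      have hiig2 : IntervalIntegrable (fun s => lamstar * (1 + C) * f s) volume 0 t :=
        hiif.const_mul _
      rw [hEq]
      calc |∫ s in (0:ℝ)..t, lam (t - s) * (S1 s * I1 s - S2 s * I2 s)|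
          ≤ ∫ s in (0:ℝ)..t, |lam (t - s) * (S1 s * I1 s - S2 s * I2 s)| :=
            intervalIntegral.abs_integral_le_integral_abs ht0
        _ ≤ ∫ s in (0:ℝ)..t, lamstar * (1 + C) * f s := by
            refine intervalIntegral.integral_mono_on ht0 hii12.abs hiig2 (fun s hs => ?_)
            rw [abs_mul, abs_of_nonneg (hlam0 _), mul_assoc]
            refine mul_le_mul (hlamb _) (hP s (hsub s hs)) (abs_nonneg _) hls0
        _ = lamstar * (1 + C) * ∫ s in (0:ℝ)..t, f s :=
            intervalIntegral.integral_const_mul _ _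
    have : f t = |S1 t - S2 t| + |I1 t - I2 t| := rfl
    rw [this, hKdef]
    nlinarith [hSdiff, hIdiff]
  have hzero := gron_zero hfm (by linarith) hK0 hfnn hfB hint
  intro t ht
  have hz := hzero t ht
  have h1 : |S1 t - S2 t| = 0 := by
    have := abs_nonneg (S1 t - S2 t); have := abs_nonneg (I1 t - I2 t)
    simp only [hfdef] at hz; linarith
  have h2 : |I1 t - I2 t| = 0 := by
    have := abs_nonneg (S1 t - S2 t); have := abs_nonneg (I1 t - I2 t)
    simp only [hfdef] at hz; linarith
  constructor
  · have := abs_eq_zero.1 h1; linarith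
  · have := abs_eq_zero.1 h2; linarith
end

section
/- Let ρ < 0, let F^c = 1−F be the complement of a c.d.f. on [0,∞) with ∫₀^∞ F^c(s) e^{-ρs} ds < ∞, and let λ̄ : [0,∞) → [0,∞) be integrable with ∫₀^∞ λ̄(t) e^{-ρt} dt = 1. Define λ̄_ρ(t) = (∫₀^∞ λ̄(t+s) e^{-ρs} ds) / (∫₀^∞ F^c(s) e^{-ρs} ds). Then the functions 𝔍(t) = −ρ e^{ρt}, I(t) = −𝐢 e^{ρt} with 𝐢 = ∫₀^∞ F^c(s) ρ e^{-ρs} ds, satisfy I(0) λ̄_ρ(t) + ∫₀^t λ̄(t−s) 𝔍(s) ds = 𝔍(t) for all t ≥ 0, where I(0) = −𝐢. -/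
open MeasureTheory Set Filter

theorem stmt12 (ρ : ℝ) (hρ : ρ < 0) (F : ℝ → ℝ) (hFmono : Monotone F) (hF0 : F 0 = 0)
    (hFrange : ∀ t, 0 ≤ F t ∧ F t ≤ 1)
    (hFint : IntegrableOn (fun s => (1 - F s) * Real.exp (-ρ * s)) (Ioi 0))
    (hFpos : 0 < ∫ s in Ioi (0:ℝ), (1 - F s) * Real.exp (-ρ * s))
    (lam : ℝ → ℝ) (hlm : Measurable lam) (hlnn : ∀ t, 0 ≤ lam t)
    (hlint : IntegrableOn lam (Ioi 0))
    (hchar : (∫ t in Ioi (0:ℝ), lam t * Real.exp (-ρ * t)) = 1) :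
    ∀ t : ℝ, 0 ≤ t →
      (-(∫ s in Ioi (0:ℝ), (1 - F s) * ρ * Real.exp (-ρ * s))) *
          ((∫ s in Ioi (0:ℝ), lam (t + s) * Real.exp (-ρ * s)) /
            (∫ s in Ioi (0:ℝ), (1 - F s) * Real.exp (-ρ * s))) +
        (∫ s in (0:ℝ)..t, lam (t - s) * (-ρ * Real.exp (ρ * s))) =
      -ρ * Real.exp (ρ * t) := by
  intro t ht
  set C := ∫ s in Ioi (0:ℝ), (1 - F s) * Real.exp (-ρ * s) with hC
  have hCne : C ≠ 0 := ne_of_gt hFpos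
  have hA : (∫ s in Ioi (0:ℝ), (1 - F s) * ρ * Real.exp (-ρ * s)) = ρ * C := by
    rw [hC, ← integral_const_mul]
    congr 1; ext s; ring
  set g : ℝ → ℝ := fun u => lam u * Real.exp (-ρ * u) with hg
  have hgint : IntegrableOn g (Ioi 0) := by
    by_contra h
    rw [MeasureTheory.integral_undef h] at hchar
    norm_num at hchar
  -- shift the first lam-integral
  have hshift : (∫ s in Ioi (0:ℝ), lam (t + s) * Real.exp (-ρ * s))
      = Real.exp (ρ * t) * ∫ u in Ioi t, g u := by
    have h1 : MeasurePreserving (fun s : ℝ => t + s) volume volume :=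
      measurePreserving_add_left volume t
    have h2 : MeasurableEmbedding (fun s : ℝ => t + s) :=
      (MeasurableEquiv.addLeft t).measurableEmbedding
    have key := h1.setIntegral_preimage_emb h2 g (Ioi t)
    have hpre : (fun s : ℝ => t + s) ⁻¹' Ioi t = Ioi 0 := by ext x; simp
    rw [hpre] at key
    rw [← key, ← integral_const_mul]
    congr 1; ext s
    simp only [hg]
    rw [show Real.exp (-ρ*(t+s)) = Real.exp (-(ρ*t)) * Real.exp (-ρ*s) by
      rw [← Real.exp_add]; ring_nf, Real.exp_neg]
    field_simp
  -- convolution integral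
  have hconv : (∫ s in (0:ℝ)..t, lam (t - s) * (-ρ * Real.exp (ρ * s)))
      = (-ρ * Real.exp (ρ * t)) * ∫ u in Ioc (0:ℝ) t, g u := by
    have key := intervalIntegral.integral_comp_sub_left
      (fun u => lam u * (-ρ * Real.exp (ρ * (t - u)))) t (a := 0) (b := t)
    simp only [sub_self, sub_zero, sub_sub_cancel] at key
    rw [key, intervalIntegral.integral_of_le ht, ← integral_const_mul]
    congr 1; ext u
    simp only [hg]
    rw [show ρ * (t - u) = ρ * t + -ρ * u by ring, Real.exp_add]
    ring
  -- split
  have hsplit : (∫ u in Ioc (0:ℝ) t, g u) + (∫ u in Ioi t, g u) = 1 := by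
    rw [← hchar]
    rw [← setIntegral_union (Ioc_disjoint_Ioi le_rfl) measurableSet_Ioi
      (hgint.mono_set Ioc_subset_Ioi_self) (hgint.mono_set (Ioi_subset_Ioi ht)),
      Ioc_union_Ioi_eq_Ioi ht]
  rw [hA, hshift, hconv]
  field_simp
  linear_combination (-ρ) * hsplit
end
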